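/- arXiv:math/0409532 — 2 statements merged into one kernel-verified Lean document; each statement's English description precedes it below -/
import Mathlib

section
/- (Proper Subfield Lemma) Let i < n and let z ∈ K^× with [z] ∈ J^{H_i}. Then [z] ∈ [K_i^×] if and only if [N_{K/F}(z)]_F = [1]_F. -/
namespace PC

/-- The subgroup of `p`-th powers of units of `K`. -/
def pPow (p : ℕ) (K : Type) [Field K] : Subgroup Kˣ :=
  (powMonoidHom p : Kˣ →* Kˣ).range

/-- `J(K) = K^×/K^{×p}`, as a multiplicative abelian group. -/
abbrev Jgrp (p : ℕ) (K : Type) [Field K] := Kˣ ⧸ pPow p K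

/-- The class `[u] ∈ J` of a unit `u` of `K`. -/
def cls (p : ℕ) {K : Type} [Field K] (u : Kˣ) : Jgrp p K := QuotientGroup.mk u

lemma Jgrp_pow (p : ℕ) {K : Type} [Field K] (x : Jgrp p K) : x ^ p = 1 := by
  induction x using QuotientGroup.induction_on with
  | H u =>
    show ((QuotientGroup.mk' (pPow p K)) u) ^ p = 1
    rw [← map_pow, QuotientGroup.mk'_apply, QuotientGroup.eq_one_iff]
    exact ⟨u, rfl⟩

/-- The action of a Galois automorphism on `J`. -/
noncomputable def galJ (p : ℕ) {F K : Type} [Field F] [Field K] [Algebra F K]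
    (σ : K ≃ₐ[F] K) : Jgrp p K →* Jgrp p K :=
  QuotientGroup.map (pPow p K) (pPow p K) (Units.map (σ : K →* K)) (by
    intro x hx
    rw [Subgroup.mem_comap]
    obtain ⟨v, rfl⟩ := hx
    exact ⟨Units.map (σ : K →* K) v, by simp [powMonoidHom, map_pow]⟩)

/-- `σ - 1` as an endomorphism of `J` (multiplicatively, `x ↦ σ(x)·x⁻¹`). -/
noncomputable def sub1 (p : ℕ) {F K : Type} [Field F] [Field K] [Algebra F K]
    (σ : K ≃ₐ[F] K) : Jgrp p K →* Jgrp p K :=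
  MonoidHom.mk' (fun x => galJ p σ x / x) (by
    intro a b
    show galJ p σ (a * b) / (a * b) = galJ p σ a / a * (galJ p σ b / b)
    rw [map_mul]
    exact mul_div_mul_comm (galJ p σ a) (galJ p σ b) a b)

/-- `(σ - 1)^k` as an endomorphism of `J`. -/
noncomputable def sub1pow (p : ℕ) {F K : Type} [Field F] [Field K] [Algebra F K]
    (σ : K ≃ₐ[F] K) (k : ℕ) : Jgrp p K →* Jgrp p K :=
  Nat.rec (MonoidHom.id _) (fun _ ih => (sub1 p σ).comp ih) k

/-- The norm endomorphism of `J`, induced by `N_{K/F}` followed by the inclusion of `F` in `K`. -/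
noncomputable def normOp (p : ℕ) (F : Type) {K : Type} [Field F] [Field K] [Algebra F K] :
    Jgrp p K →* Jgrp p K :=
  QuotientGroup.map (pPow p K) (pPow p K)
    (Units.map ((algebraMap F K : F →* K).comp (Algebra.norm F : K →* F))) (by
      intro x hx
      rw [Subgroup.mem_comap]
      obtain ⟨v, rfl⟩ := hx
      exact ⟨Units.map ((algebraMap F K : F →* K).comp (Algebra.norm F : K →* F)) v,
        by simp [powMonoidHom, map_pow]⟩)

/-- The cyclic `𝔽_p[Gal(K/F)]`-submodule of `J` generated by an element. -/
noncomputable def cyc (p : ℕ) (F : Type) {K : Type} [Field F] [Field K] [Algebra F K]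
    (x : Jgrp p K) : Subgroup (Jgrp p K) :=
  Subgroup.closure {y | ∃ τ : K ≃ₐ[F] K, galJ p τ x = y}

/-- The subgroup of `J` fixed pointwise by a subgroup `H` of the Galois group. -/
noncomputable def fixedJ (p : ℕ) {F K : Type} [Field F] [Field K] [Algebra F K]
    (H : Subgroup (K ≃ₐ[F] K)) : Subgroup (Jgrp p K) where
  carrier := {x | ∀ τ ∈ H, galJ p τ x = x}
  one_mem' := by
    intro τ _
    exact map_one (galJ p τ)
  mul_mem' := by
    intro a b ha hb τ hτ
    rw [map_mul, ha τ hτ, hb τ hτ]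
  inv_mem' := by
    intro a ha τ hτ
    rw [map_inv, ha τ hτ]

/-- The units of `K` lying in an intermediate field `E`. -/
def unitsIn {F K : Type} [Field F] [Field K] [Algebra F K]
    (E : IntermediateField F K) : Subgroup Kˣ where
  carrier := {u | (u : K) ∈ E}
  one_mem' := by
    show ((1 : Kˣ) : K) ∈ E
    rw [Units.val_one]
    exact one_mem E
  mul_mem' := by
    intro a b ha hb
    show ((a * b : Kˣ) : K) ∈ E
    rw [Units.val_mul]
    exact mul_mem ha hb
  inv_mem' := by
    intro u hu
    show ((u⁻¹ : Kˣ) : K) ∈ E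
    rw [Units.val_inv_eq_inv_val]
    exact inv_mem hu

/-- `[E^×] ⊆ J` : the classes of units of the intermediate field `E`. -/
noncomputable def clsOf (p : ℕ) {F K : Type} [Field F] [Field K] [Algebra F K]
    (E : IntermediateField F K) : Subgroup (Jgrp p K) :=
  (unitsIn E).map (QuotientGroup.mk' (pPow p K))

/-- `[K_m^×]` for `m ∈ {-∞, 0, 1, 2, ...}`, with `[K_{-∞}^×] = {1}`. -/
noncomputable def clsOfW (p : ℕ) {F K : Type} [Field F] [Field K] [Algebra F K]
    (Ki : ℕ → IntermediateField F K) (m : WithBot ℕ) : Subgroup (Jgrp p K) :=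
  m.recBotCoe ⊥ (fun i => clsOf p (Ki i))

/-- `p^m` for `m ∈ {-∞, 0, 1, 2, ...}`, with the convention `p^{-∞} = 0`. -/
def pPowW (p : ℕ) (m : WithBot ℕ) : ℕ := m.recBotCoe 0 (fun i => p ^ i)

/-- `m ∔ 1` : `-∞ ∔ 1 = 0` and `m ∔ 1 = m + 1` for `m ≥ 0`. -/
def succW (m : WithBot ℕ) : ℕ := m.recBotCoe 0 (fun i => i + 1)

/-- `[N_{E/F}(E^×)] ⊆ J` : classes of norms (to `F`) of units of an intermediate field `E`. -/
noncomputable def normClsOf (p : ℕ) {F K : Type} [Field F] [Field K] [Algebra F K]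
    (E : IntermediateField F K) : Subgroup (Jgrp p K) :=
  Subgroup.map (QuotientGroup.mk' (pPow p K))
    ((Units.map ((algebraMap F K : F →* K).comp (Algebra.norm F : ↥E →* F))).range)

/-- `[N_{K/F}(K^×)] ⊆ J`. -/
noncomputable def normClsTop (p : ℕ) (F K : Type) [Field F] [Field K] [Algebra F K] :
    Subgroup (Jgrp p K) :=
  Subgroup.map (QuotientGroup.mk' (pPow p K))
    ((Units.map ((algebraMap F K : F →* K).comp (Algebra.norm F : K →* F))).range)

/-- `[N_{K/E}(K^×)] ⊆ J` for an intermediate field `E` of `K/F`. -/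
noncomputable def relNormCls (p : ℕ) {F K : Type} [Field F] [Field K] [Algebra F K]
    (E : IntermediateField F K) : Subgroup (Jgrp p K) :=
  Subgroup.map (QuotientGroup.mk' (pPow p K))
    ((Units.map ((algebraMap (↥E) K : ↥E →* K).comp (Algebra.norm (↥E) : K →* ↥E))).range)

/-- `Y` is a direct sum of cyclic `𝔽_p[G]`-submodules of `J`, each of `𝔽_p`-dimension `d`. -/
noncomputable def IsCyclicSumDim (p : ℕ) (F : Type) {K : Type} [Field F] [Field K] [Algebra F K]
    (Y : Subgroup (Jgrp p K)) (d : ℕ) : Prop :=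
  ∃ (ι : Type) (g : ι → Jgrp p K),
    (∀ k, Nat.card (cyc p F (g k)) = p ^ d) ∧
    (∀ k : ι, cyc p F (g k) ⊓ (⨆ k' ∈ {k' : ι | k' ≠ k}, cyc p F (g k')) = ⊥) ∧
    Y = ⨆ k, cyc p F (g k)

/-- The "stage" predicate entering the definition of `i(K/E)` : there is `δ ∈ K^×` whose
norm class `[N_{K/E}(δ)]_E` is nontrivial and with `[δ]^{τ-1} ∈ C` for all `τ ∈ Gal(K/E)`. -/
noncomputable def Stage (p : ℕ) (E : Type) {K : Type} [Field E] [Field K] [Algebra E K]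
    (C : Subgroup (Jgrp p K)) : Prop :=
  ∃ δ : Kˣ, (∀ y : E, y ^ p ≠ Algebra.norm E (δ : K)) ∧
    ∀ τ : K ≃ₐ[E] K, cls p (Units.map (τ : K →* K) δ * δ⁻¹) ∈ C

/-- `m = i(K/F)` : the stage `m` is realized and no smaller stage is. -/
noncomputable def IsIdx (p : ℕ) {F K : Type} [Field F] [Field K] [Algebra F K]
    (Ki : ℕ → IntermediateField F K) (m : WithBot ℕ) : Prop :=
  Stage p F (clsOfW p Ki m) ∧ ∀ i : WithBot ℕ, i < m → ¬ Stage p F (clsOfW p Ki i)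

/-- `δ` is an exceptional element of `K/F`, relative to `m = i(K/F)`. -/
noncomputable def IsExceptional (p : ℕ) (F : Type) {K : Type} [Field F] [Field K] [Algebra F K]
    (Ki : ℕ → IntermediateField F K) (m : WithBot ℕ) (δ : Kˣ) : Prop :=
  (∀ y : F, y ^ p ≠ Algebra.norm F (δ : K)) ∧
    ∀ τ : K ≃ₐ[F] K, cls p (Units.map (τ : K →* K) δ * δ⁻¹) ∈ clsOfW p Ki m



section AuxiliaryLemmas

variable {F K : Type} [Field F] [Field K] [Algebra F K]

/-- Applying any integer power of `g` fixes `x` if `g` does. -/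
lemma fix_zpow (g : K ≃ₐ[F] K) (x : K) (h : g x = x) : ∀ m : ℤ, (g ^ m) x = x := by
  have hnat : ∀ k : ℕ, (g ^ k) x = x := by
    intro k
    induction k with
    | zero => simp
    | succ k ih => rw [pow_succ, AlgEquiv.mul_apply, h, ih]
  intro m
  cases m with
  | ofNat k => simpa using hnat k
  | negSucc k =>
    rw [zpow_negSucc]
    conv_lhs => rw [← hnat (k + 1)]
    rw [← AlgEquiv.mul_apply, inv_mul_cancel, AlgEquiv.one_apply]

/-- p-th roots of unity are fixed by automorphisms in a p-group Galois group. -/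
lemma root_fixed (p n : ℕ) (hp : p.Prime)
    (hG : Nat.card (K ≃ₐ[F] K) = p ^ n)
    (g : K ≃ₐ[F] K) (u : K) (hu : u ^ p = 1) : g u = u := by
  haveI : Fact p.Prime := ⟨hp⟩
  haveI : NeZero p := ⟨hp.ne_zero⟩
  by_cases h1 : u = 1
  · simp [h1]
  have hord : orderOf u = p := by
    rcases hp.eq_one_or_self_of_dvd _ (orderOf_dvd_of_pow_eq_one hu) with h | h
    · exact absurd (orderOf_eq_one_iff.mp h) h1
    · exact h
  have hprim : IsPrimitiveRoot u p := hord ▸ IsPrimitiveRoot.orderOf u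
  have hgu : (g u) ^ p = 1 := by rw [← map_pow, hu, map_one]
  obtain ⟨k, hk, hku⟩ := hprim.eq_pow_of_pow_eq_one hgu
  have hit : ∀ m : ℕ, (g ^ m) u = u ^ (k ^ m) := by
    intro m
    induction m with
    | zero => simp
    | succ m ih =>
      rw [pow_succ, AlgEquiv.mul_apply, ← hku, map_pow, ih, ← pow_mul, pow_succ]
  have hg1 : g ^ (p ^ n) = 1 := by
    have := pow_card_eq_one' (x := g)
    rwa [hG] at this
  have hfix : u ^ (k ^ (p ^ n)) = u := by rw [← hit, hg1, AlgEquiv.one_apply]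
  have hmod : k ^ p ^ n % p = k % p := by
    have h2 : ((k : ZMod p)) ^ (p ^ n) = (k : ZMod p) := ZMod.pow_card_pow _
    exact (ZMod.natCast_eq_natCast_iff _ _ _).mp (by push_cast; exact h2)
  calc g u = u ^ k := hku.symm
    _ = u ^ (k % p) := by rw [← hord]; exact (pow_mod_orderOf _ _).symm
    _ = u ^ (k ^ p ^ n % p) := by rw [hmod]
    _ = u ^ (k ^ p ^ n) := by rw [← hord]; exact pow_mod_orderOf _ _
    _ = u := hfix

-- (helpers continue)



variable {F K : Type} [Field F] [Field K] [Algebra F K]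

/-- The fixing subgroup of the degree-`p^i` intermediate field is generated by `σ^(p^i)`. -/
lemma fixing_eq [FiniteDimensional F K] [IsGalois F K]
    (p n : ℕ) (hp : p.Prime) (σ : K ≃ₐ[F] K)
    (hσ : ∀ τ : K ≃ₐ[F] K, τ ∈ Subgroup.zpowers σ)
    (hG : Nat.card (K ≃ₐ[F] K) = p ^ n)
    (E : IntermediateField F K) (i : ℕ) (hin : i ≤ n)
    (hE : Module.finrank F ↥E = p ^ i) :
    E.fixingSubgroup = Subgroup.zpowers (σ ^ p ^ i) := by
  have horder : orderOf σ = p ^ n := (orderOf_eq_card_of_forall_mem_zpowers hσ).trans hG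
  have hfr : Module.finrank F K = p ^ n := by
    rw [← IsGalois.card_aut_eq_finrank, hG]
  have hsplit : p ^ n = p ^ i * p ^ (n - i) := by
    rw [← pow_add, Nat.add_sub_cancel' hin]
  have hEK : Module.finrank (↥E) K = p ^ (n - i) := by
    have h := Module.finrank_mul_finrank F ↥E K
    rw [hE, hfr, hsplit] at h
    exact Nat.eq_of_mul_eq_mul_left (pow_pos hp.pos i) h
  have hHcard : Nat.card E.fixingSubgroup = p ^ (n - i) := by
    rw [Nat.card_congr (IntermediateField.fixingSubgroupEquiv E).toEquiv,
      IsGalois.card_aut_eq_finrank, hEK]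
  have horderτ : orderOf (σ ^ p ^ i) = p ^ (n - i) := by
    rw [orderOf_pow, horder, Nat.gcd_eq_right (pow_dvd_pow p hin), Nat.pow_div hin hp.pos]
  have hle : E.fixingSubgroup ≤ Subgroup.zpowers (σ ^ p ^ i) := by
    intro g hg
    obtain ⟨m, rfl⟩ := hσ g
    have h1 : (σ ^ m) ^ (p ^ (n - i)) = 1 := by
      have h0 := pow_card_eq_one' (x := (⟨σ ^ m, hg⟩ : E.fixingSubgroup))
      rw [hHcard] at h0
      simpa using congrArg Subtype.val h0
    have h2 : σ ^ (m * ((p ^ (n - i) : ℕ) : ℤ)) = 1 := by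
      rw [zpow_mul, zpow_natCast]
      exact h1
    have h3 : (p : ℤ) ^ i * (p : ℤ) ^ (n - i) ∣ m * (p : ℤ) ^ (n - i) := by
      have h3' : ((p ^ n : ℕ) : ℤ) ∣ m * ((p ^ (n - i) : ℕ) : ℤ) := by
        rw [← horder]
        exact orderOf_dvd_iff_zpow_eq_one.mpr h2
      rw [hsplit] at h3'
      push_cast at h3'
      exact h3'
    have h4 : (p : ℤ) ^ i ∣ m := by
      have hne : (p : ℤ) ^ (n - i) ≠ 0 := pow_ne_zero _ (by exact_mod_cast hp.ne_zero)
      exact (mul_dvd_mul_iff_right hne).mp h3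
    obtain ⟨t, ht⟩ := h4
    refine ⟨t, ?_⟩
    show (σ ^ (p ^ i : ℕ)) ^ t = σ ^ m
    rw [ht, ← zpow_natCast σ (p ^ i), ← zpow_mul]
    norm_cast
  exact Subgroup.eq_of_le_of_card_ge hle (by rw [hHcard, Nat.card_zpowers, horderτ])



variable {F K : Type} [Field F] [Field K] [Algebra F K]

/-- Product over the cyclic Galois group, sliced as a double product. -/
lemma prod_aut [FiniteDimensional F K] [IsGalois F K]
    (σ : K ≃ₐ[F] K) (hσ : ∀ τ : K ≃ₐ[F] K, τ ∈ Subgroup.zpowers σ)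
    (a b : ℕ) (hab : Nat.card (K ≃ₐ[F] K) = a * b) (x : K) :
    ∏ g : (K ≃ₐ[F] K), g x
      = ∏ j ∈ Finset.range a, ∏ l ∈ Finset.range b, (σ ^ j) (((σ ^ a) ^ l) x) := by
  have horder : orderOf σ = a * b := (orderOf_eq_card_of_forall_mem_zpowers hσ).trans hab
  have hbij : Function.Bijective (fun m : Fin (a * b) => σ ^ (m : ℕ)) := by
    rw [Fintype.bijective_iff_injective_and_card]
    constructor
    · intro m m' h
      exact Fin.ext (pow_injOn_Iio_orderOf (by rw [horder]; exact m.2)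
        (by rw [horder]; exact m'.2) h)
    · rw [Fintype.card_fin, ← Nat.card_eq_fintype_card, hab]
  have h1 : ∏ g : (K ≃ₐ[F] K), g x = ∏ m : Fin (a * b), (σ ^ (m : ℕ)) x :=
    (Fintype.prod_bijective _ hbij _ _ (fun m => rfl)).symm
  rw [h1, mul_comm a b, ← finProdFinEquiv.prod_comp]
  rw [Fintype.prod_prod_type]
  rw [Finset.prod_comm]
  rw [← Fin.prod_univ_eq_prod_range]
  refine Finset.prod_congr rfl fun j _ => ?_
  rw [← Fin.prod_univ_eq_prod_range]
  refine Finset.prod_congr rfl fun l _ => ?_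
  have hval : ((finProdFinEquiv (l, j) : Fin (b * a)) : ℕ) = (j : ℕ) + a * (l : ℕ) := rfl
  rw [hval, pow_add, pow_mul, AlgEquiv.mul_apply]



variable {F K : Type} [Field F] [Field K] [Algebra F K]

/-- Concrete Hilbert 90 for the cyclic subgroup generated by `τ`. -/
lemma h90 (τ : K ≃ₐ[F] K) (q : ℕ) (hq : 0 < q) (horder : orderOf τ = q)
    (w : K) (hw : w ≠ 0)
    (hnorm : ∏ l ∈ Finset.range q, (τ ^ l) w = 1) :
    ∃ β : K, β ≠ 0 ∧ w * τ β = β := by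
  set y : ℕ → K := fun j => ∏ l ∈ Finset.range j, (τ ^ l) w with hy
  have hy0 : ∀ j, y j ≠ 0 := by
    intro j
    refine Finset.prod_ne_zero_iff.mpr fun l _ => ?_
    exact (map_ne_zero (τ ^ l)).mpr hw
  have hyrec : ∀ j, y (j + 1) = w * τ (y j) := by
    intro j
    show (∏ l ∈ Finset.range (j + 1), (τ ^ l) w) = w * τ (∏ l ∈ Finset.range j, (τ ^ l) w)
    rw [Finset.prod_range_succ', map_prod, pow_zero, AlgEquiv.one_apply, mul_comm]
    congr 1
    exact Finset.prod_congr rfl fun l _ => by rw [pow_succ', AlgEquiv.mul_apply]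
  -- the characters τ^j restricted to units, as monoid homs to K
  set χ : Fin q → (Kˣ →* K) :=
    fun j => ((τ ^ (j : ℕ)).toAlgHom.toRingHom.toMonoidHom).comp (Units.coeHom K) with hχ
  have hinj : Function.Injective χ := by
    intro j k h
    have heq : (τ ^ (j : ℕ)) = (τ ^ (k : ℕ)) := by
      refine AlgEquiv.ext fun x => ?_
      by_cases hx : x = 0
      · simp [hx]
      · simpa [χ] using DFunLike.congr_fun h (Units.mk0 x hx)
    exact Fin.ext (pow_injOn_Iio_orderOf (by rw [horder]; exact j.2)
      (by rw [horder]; exact k.2) heq)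
  have hli := (linearIndependent_monoidHom Kˣ K).comp χ hinj
  have hex : ∃ u : Kˣ, ∑ j : Fin q, y (j : ℕ) * (τ ^ (j : ℕ)) (u : K) ≠ 0 := by
    by_contra hall
    push_neg at hall
    have hzero : ∑ j : Fin q, y (j : ℕ) • ((χ j : Kˣ →* K) : Kˣ → K) = 0 := by
      funext u
      simpa [χ] using hall u
    have := Fintype.linearIndependent_iff.mp hli (fun j => y (j : ℕ)) hzero ⟨0, hq⟩
    exact hy0 0 this
  obtain ⟨u, hu⟩ := hex
  refine ⟨∑ j : Fin q, y (j : ℕ) * (τ ^ (j : ℕ)) (u : K), hu, ?_⟩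
  have hτq : τ ^ q = 1 := horder ▸ pow_orderOf_eq_one τ
  -- compute w * τ β
  rw [map_sum, Finset.mul_sum]
  have hterm : ∀ j : Fin q,
      w * τ (y (j : ℕ) * (τ ^ (j : ℕ)) (u : K))
        = y ((j : ℕ) + 1) * (τ ^ ((j : ℕ) + 1)) (u : K) := by
    intro j
    rw [map_mul, hyrec]
    rw [← AlgEquiv.mul_apply, ← pow_succ']
    ring
  rw [Fintype.sum_congr _ _ hterm]
  -- convert to range sums and shift
  have hf : ∀ g : ℕ → K, ∑ j : Fin q, g (j : ℕ) = ∑ j ∈ Finset.range q, g j :=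
    fun g => Fin.sum_univ_eq_sum_range g q
  set f : ℕ → K := fun j => y j * (τ ^ j) (u : K) with hfdef
  rw [hf (fun j => f (j + 1)), hf f]
  have hfq : f q = f 0 := by
    have hyq1 : y q = 1 := hnorm
    have hy00 : y 0 = 1 := Finset.prod_range_zero _
    simp only [hfdef, hτq, hyq1, hy00, pow_zero, AlgEquiv.one_apply, one_mul]
  have h1 := Finset.sum_range_succ f q
  have h2 := Finset.sum_range_succ' f q
  rw [h1] at h2
  -- h2 : ∑_{j<q} f j + f q = ∑_{j<q} f (j+1) + f 0
  rw [hfq] at h2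
  exact (add_right_cancel h2.symm)


end AuxiliaryLemmas

/-- **Proper Subfield Lemma.** For `i < n` and `[z] ∈ J^{H_i}`:
`[z] ∈ [K_i^×]` iff `[N_{K/F}(z)]_F = [1]_F`. -/
theorem statement_16
    (p n : ℕ) (hp : p.Prime) (hn : 1 ≤ n)
    (F K : Type) [Field F] [Field K] [Algebra F K]
    [FiniteDimensional F K] [IsGalois F K]
    (σ : K ≃ₐ[F] K) (hσ : ∀ τ : K ≃ₐ[F] K, τ ∈ Subgroup.zpowers σ)
    (hG : Nat.card (K ≃ₐ[F] K) = p ^ n)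
    (Ki : ℕ → IntermediateField F K)
    (hKideg : ∀ i, i ≤ n → Module.finrank F ↥(Ki i) = p ^ i)
    (i : ℕ) (hi : i < n)
    (z : Kˣ) (hz : cls p z ∈ fixedJ p (Ki i).fixingSubgroup) :
    cls p z ∈ clsOf p (Ki i) ↔ ∃ f : F, f ^ p = Algebra.norm F (z : K) := by
  classical
  have hin : i ≤ n := hi.le
  set E := Ki i with hEdef
  set τ : K ≃ₐ[F] K := σ ^ p ^ i with hτdef
  have hfix : E.fixingSubgroup = Subgroup.zpowers τ :=
    fixing_eq p n hp σ hσ hG E i hin (hKideg i hin)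
  have horder : orderOf σ = p ^ n := (orderOf_eq_card_of_forall_mem_zpowers hσ).trans hG
  have horderτ : orderOf τ = p ^ (n - i) := by
    rw [hτdef, orderOf_pow, horder, Nat.gcd_eq_right (pow_dvd_pow p hin),
      Nat.pow_div hin hp.pos]
  set q : ℕ := p ^ (n - i) with hqdef
  set q' : ℕ := p ^ (n - i - 1) with hq'def
  have hq : q = q' * p := by
    rw [hqdef, hq'def, ← pow_succ]
    congr 1
    omega
  have hq0 : 0 < q := pow_pos hp.pos _
  have hsplitcard : Nat.card (K ≃ₐ[F] K) = p ^ i * q := by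
    rw [hG, hqdef, ← pow_add, Nat.add_sub_cancel' hin]
  have hnormprod : ∀ x : K, algebraMap F K (Algebra.norm F x)
      = ∏ j ∈ Finset.range (p ^ i), ∏ l ∈ Finset.range q, (σ ^ j) (((τ : K ≃ₐ[F] K) ^ l) x) := by
    intro x
    rw [Algebra.norm_eq_prod_automorphisms, prod_aut σ hσ (p ^ i) q hsplitcard, hτdef]
  have hτmem : τ ∈ E.fixingSubgroup := hfix ▸ Subgroup.mem_zpowers τ
  have hτfix : ∀ x : K, x ∈ E → τ x = x := fun x hx =>
    (IntermediateField.mem_fixingSubgroup_iff E τ).mp hτmem x hx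
  have hfixed_mem : ∀ x : K, τ x = x → x ∈ E := by
    intro x hx
    have hmem : x ∈ IntermediateField.fixedField E.fixingSubgroup := by
      rw [hfix]
      intro g
      obtain ⟨m, hm⟩ := g.2
      show (g : K ≃ₐ[F] K) x = x
      rw [← hm]
      exact fix_zpow τ x hx m
    rwa [IsGalois.fixedField_fixingSubgroup] at hmem
  constructor
  · -- forward direction
    intro hmem
    simp only [clsOf] at hmem
    obtain ⟨a, haE, hak⟩ := Subgroup.mem_map.mp hmem
    have haE' : ((a : Kˣ) : K) ∈ E := haE
    have hmk : (QuotientGroup.mk a : Jgrp p K) = QuotientGroup.mk z := hak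
    obtain ⟨c, hc⟩ := (QuotientGroup.eq).mp hmk
    rw [powMonoidHom_apply] at hc
    have hz_ac : z = a * c ^ p := by rw [hc, mul_inv_cancel_left]
    have hzK : (z : K) = (a : K) * ((c : K)) ^ p := by
      have h := congrArg Units.val hz_ac
      push_cast at h
      exact h
    have hτa : τ ((a : Kˣ) : K) = ((a : Kˣ) : K) := hτfix _ haE'
    have hτla : ∀ l : ℕ, ((τ : K ≃ₐ[F] K) ^ l) ((a : Kˣ) : K) = ((a : Kˣ) : K) := by
      intro l
      induction l with
      | zero => simp
      | succ l ih => rw [pow_succ, AlgEquiv.mul_apply, hτa, ih]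
    set B : K := ∏ j ∈ Finset.range (p ^ i), (σ ^ j) ((a : Kˣ) : K) with hBdef
    have ha0 : ((a : Kˣ) : K) ≠ 0 := Units.ne_zero a
    have hσB : σ B = B := by
      have h1 : σ B = ∏ j ∈ Finset.range (p ^ i), (σ ^ (j + 1)) ((a : Kˣ) : K) := by
        rw [hBdef, map_prod]
        exact Finset.prod_congr rfl fun j _ => by rw [pow_succ', AlgEquiv.mul_apply]
      have h2 := Finset.prod_range_succ (fun j => (σ ^ j) ((a : Kˣ) : K)) (p ^ i)
      have h3 := Finset.prod_range_succ' (fun j => (σ ^ j) ((a : Kˣ) : K)) (p ^ i)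
      rw [h2] at h3
      -- h3 : B * (σ ^ p ^ i) a = (∏ f (j+1)) * (σ ^ 0) a
      have h4 : (σ ^ p ^ i) ((a : Kˣ) : K) = ((a : Kˣ) : K) := by
        rw [← hτdef]; exact hτa
      rw [h4, pow_zero, AlgEquiv.one_apply] at h3
      rw [h1]
      exact mul_right_cancel₀ ha0 h3.symm
    have hBF : B ∈ (⊥ : IntermediateField F K) := by
      have hmemfix : B ∈ IntermediateField.fixedField
          ((⊥ : IntermediateField F K)).fixingSubgroup := by
        intro g
        obtain ⟨m, hm⟩ := hσ (g : K ≃ₐ[F] K)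
        show (g : K ≃ₐ[F] K) B = B
        rw [← hm]
        exact fix_zpow σ B hσB m
      rwa [IsGalois.fixedField_fixingSubgroup] at hmemfix
    obtain ⟨b, hb⟩ := IntermediateField.mem_bot.mp hBF
    have hnormA : algebraMap F K (Algebra.norm F ((a : Kˣ) : K)) = B ^ q := by
      rw [hnormprod]
      calc ∏ j ∈ Finset.range (p ^ i), ∏ l ∈ Finset.range q,
            (σ ^ j) (((τ : K ≃ₐ[F] K) ^ l) ((a : Kˣ) : K))
          = ∏ j ∈ Finset.range (p ^ i), ((σ ^ j) ((a : Kˣ) : K)) ^ q := by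
            refine Finset.prod_congr rfl fun j _ => ?_
            rw [Finset.prod_congr rfl fun l _ => by rw [hτla l],
              Finset.prod_const, Finset.card_range]
        _ = B ^ q := by rw [hBdef, ← Finset.prod_pow]
    have hNa : Algebra.norm F ((a : Kˣ) : K) = b ^ q := by
      apply (algebraMap F K).injective
      rw [map_pow, hb, hnormA]
    refine ⟨b ^ q' * Algebra.norm F ((c : Kˣ) : K), ?_⟩
    rw [mul_pow, ← pow_mul, ← hq, ← hNa, ← map_pow, ← map_mul, ← hzK]
  · -- backward direction
    intro hfex
    obtain ⟨f, hf⟩ := hfex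
    have hgal := hz τ hτmem
    have hmkeq : (QuotientGroup.mk (Units.map ((τ : K ≃ₐ[F] K) : K →* K) z) : Jgrp p K)
        = QuotientGroup.mk z := by
      have h0 : galJ p τ (cls p z)
          = QuotientGroup.mk (Units.map ((τ : K ≃ₐ[F] K) : K →* K) z) :=
        QuotientGroup.map_mk _ _ _ _ _
      rw [← h0]
      exact hgal
    obtain ⟨v, hv⟩ := (QuotientGroup.eq).mp hmkeq
    rw [powMonoidHom_apply] at hv
    set w : Kˣ := v⁻¹ with hwdef
    have hUnits : Units.map ((τ : K ≃ₐ[F] K) : K →* K) z = z * w ^ p := by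
      rw [hwdef, inv_pow, hv]
      group
    have hwK : τ ((z : Kˣ) : K) = ((z : Kˣ) : K) * ((w : Kˣ) : K) ^ p := by
      have h := congrArg Units.val hUnits
      push_cast at h
      simpa using h
    set zv : K := ((z : Kˣ) : K) with hzvdef
    set wv : K := ((w : Kˣ) : K) with hwvdef
    have hz0 : zv ≠ 0 := Units.ne_zero z
    have hw0 : wv ≠ 0 := Units.ne_zero w
    set y : ℕ → K := fun j => ∏ l ∈ Finset.range j, ((τ : K ≃ₐ[F] K) ^ l) wv with hydef
    have hy0 : ∀ j, y j ≠ 0 := by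
      intro j
      refine Finset.prod_ne_zero_iff.mpr fun l _ => ?_
      exact (map_ne_zero ((τ : K ≃ₐ[F] K) ^ l)).mpr hw0
    have hyrec : ∀ j, y (j + 1) = wv * τ (y j) := by
      intro j
      show (∏ l ∈ Finset.range (j + 1), ((τ : K ≃ₐ[F] K) ^ l) wv)
        = wv * τ (∏ l ∈ Finset.range j, ((τ : K ≃ₐ[F] K) ^ l) wv)
      rw [Finset.prod_range_succ', map_prod, pow_zero, AlgEquiv.one_apply, mul_comm]
      congr 1
      exact Finset.prod_congr rfl fun l _ => by rw [pow_succ', AlgEquiv.mul_apply]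
    have htel : ∀ j : ℕ, ((τ : K ≃ₐ[F] K) ^ j) zv = zv * (y j) ^ p := by
      intro j
      induction j with
      | zero => simp [hydef]
      | succ j ih =>
        rw [pow_succ', AlgEquiv.mul_apply, ih, map_mul, map_pow, hwK, hyrec, mul_pow]
        ring
    have hτq1 : (τ : K ≃ₐ[F] K) ^ q = 1 := by
      rw [← horderτ]
      exact pow_orderOf_eq_one τ
    have hεp : (y q) ^ p = 1 := by
      have h := htel q
      rw [hτq1, AlgEquiv.one_apply] at h
      have h2 : zv * 1 = zv * (y q) ^ p := by rw [mul_one]; exact h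
      exact (mul_left_cancel₀ hz0 h2).symm
    set Y : K := ∏ j ∈ Finset.range q, y j with hYdef
    have hY0 : Y ≠ 0 := Finset.prod_ne_zero_iff.mpr fun j _ => hy0 j
    set ystar : K := zv ^ q' * Y with hystardef
    have hystar0 : ystar ≠ 0 := mul_ne_zero (pow_ne_zero _ hz0) hY0
    have hysp : ystar ^ p = ∏ l ∈ Finset.range q, ((τ : K ≃ₐ[F] K) ^ l) zv := by
      rw [Finset.prod_congr rfl fun l _ => htel l, Finset.prod_mul_distrib,
        Finset.prod_const, Finset.card_range, Finset.prod_pow, ← hYdef,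
        hystardef, mul_pow, ← pow_mul, ← hq]
    have hτystar : τ ystar = y q * ystar := by
      have hτY : wv ^ q * τ Y = Y * y q := by
        have h1 : wv ^ q * τ Y = ∏ j ∈ Finset.range q, (wv * τ (y j)) := by
          rw [Finset.prod_mul_distrib, Finset.prod_const, Finset.card_range, hYdef, map_prod]
        have h2 : ∏ j ∈ Finset.range q, (wv * τ (y j)) = ∏ j ∈ Finset.range q, y (j + 1) :=
          Finset.prod_congr rfl fun j _ => (hyrec j).symm
        have h3 := Finset.prod_range_succ y q
        have h4 := Finset.prod_range_succ' y q
        rw [h3] at h4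
        have hy00 : y 0 = 1 := Finset.prod_range_zero _
        rw [hy00, mul_one] at h4
        rw [h1, h2, ← h4, ← hYdef]
      have hτzq' : τ (zv ^ q') = zv ^ q' * wv ^ q := by
        rw [map_pow, hwK, mul_pow, ← pow_mul, mul_comm p q', ← hq]
      rw [hystardef, map_mul, hτzq', mul_assoc, hτY]
      ring
    set x : K := ∏ j ∈ Finset.range (p ^ i), (σ ^ j) ystar with hxdef
    have hx0 : x ≠ 0 := Finset.prod_ne_zero_iff.mpr fun j _ => by exact (map_ne_zero (σ ^ j)).mpr hystar0
    have hσx : σ x = y q * x := by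
      have h1 : σ x = ∏ j ∈ Finset.range (p ^ i), (σ ^ (j + 1)) ystar := by
        rw [hxdef, map_prod]
        exact Finset.prod_congr rfl fun j _ => by rw [pow_succ', AlgEquiv.mul_apply]
      have h2 := Finset.prod_range_succ (fun j => (σ ^ j) ystar) (p ^ i)
      have h3 := Finset.prod_range_succ' (fun j => (σ ^ j) ystar) (p ^ i)
      rw [h2] at h3
      have h4 : (σ ^ p ^ i) ystar = y q * ystar := by rw [← hτdef]; exact hτystar
      rw [h4, pow_zero, AlgEquiv.one_apply] at h3
      rw [h1]
      apply mul_right_cancel₀ hystar0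
      rw [← h3, ← hxdef]
      ring
    have hxp : x ^ p = (algebraMap F K f) ^ p := by
      rw [hxdef, ← Finset.prod_pow]
      have h1 : ∀ j ∈ Finset.range (p ^ i), ((σ ^ j) ystar) ^ p
          = ∏ l ∈ Finset.range q, (σ ^ j) (((τ : K ≃ₐ[F] K) ^ l) zv) := by
        intro j _
        rw [← map_pow, hysp, map_prod]
      rw [Finset.prod_congr rfl h1, ← hnormprod, ← hf, map_pow]
    have hAf0 : algebraMap F K f ≠ 0 := by
      intro h0
      rw [h0, zero_pow hp.ne_zero] at hxp
      exact hx0 ((pow_eq_zero_iff hp.ne_zero).mp hxp)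
    set u : K := x * (algebraMap F K f)⁻¹ with hudef
    have hup : u ^ p = 1 := by
      rw [hudef, mul_pow, hxp, inv_pow, mul_inv_cancel₀ (pow_ne_zero _ hAf0)]
    have hσu : σ u = y q * u := by
      rw [hudef, map_mul, hσx, map_inv₀, AlgEquiv.commutes]
      ring
    have hu0 : u ≠ 0 := by
      intro h0
      rw [h0, zero_pow hp.ne_zero] at hup
      exact zero_ne_one hup
    have hε1 : y q = 1 := by
      have hfixu : σ u = u := root_fixed p n hp hG σ u hup
      have h := hσu.symm.trans hfixu
      exact mul_right_cancel₀ hu0 (by rw [h, one_mul])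
    obtain ⟨β, hβ0, hβ⟩ := h90 τ q hq0 horderτ wv hw0 hε1
    have hτaa : τ (zv * β ^ p) = zv * β ^ p := by
      rw [map_mul, map_pow, hwK, mul_assoc, ← mul_pow, hβ]
    have haE2 : zv * β ^ p ∈ E := hfixed_mem _ hτaa
    set βu : Kˣ := Units.mk0 β hβ0 with hβudef
    simp only [clsOf]
    refine Subgroup.mem_map.mpr ⟨z * βu ^ p, ?_, ?_⟩
    · show ((z * βu ^ p : Kˣ) : K) ∈ E
      have hval : ((z * βu ^ p : Kˣ) : K) = zv * β ^ p := by
        push_cast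
        simp [hβudef, hzvdef]
      rw [hval]
      exact haE2
    · show (QuotientGroup.mk (z * βu ^ p) : Jgrp p K) = QuotientGroup.mk z
      refine (QuotientGroup.eq).mpr ⟨βu⁻¹, ?_⟩
      rw [powMonoidHom_apply]
      group

end PC
end

section
/- (Fixed Elements of Length 3 Submodules are Norms Lemma) Suppose p = 2 and n = 2 (so K/F is cyclic of degree 4). Let γ ∈ K^× with l(γ) = 3 and [N_{K/F}(γ)]_F = [1]_F. Then there exists α ∈ K^× such that M_γ^G = ⟨N[α]⟩, where N[α] = [N_{K/F}(α)]. -/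
namespace PC

section AuxLemmas

variable {F K : Type} [Field F] [Field K] [Algebra F K]

lemma galJ_cls (p : ℕ) (τ : K ≃ₐ[F] K) (u : Kˣ) :
    galJ p τ (cls p u) = cls p (Units.map (τ : K →* K) u) := rfl

lemma galJ_galJ (p : ℕ) (τ τ' : K ≃ₐ[F] K) (x : Jgrp p K) :
    galJ p (τ * τ') x = galJ p τ (galJ p τ' x) := by
  induction x using QuotientGroup.induction_on with
  | H u =>
    show galJ p (τ * τ') (cls p u) = galJ p τ (galJ p τ' (cls p u))
    rw [galJ_cls, galJ_cls, galJ_cls]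
    exact congrArg (cls p) (by ext; simp [AlgEquiv.mul_apply])

lemma galJ_one (p : ℕ) (x : Jgrp p K) : galJ p (1 : K ≃ₐ[F] K) x = x := by
  induction x using QuotientGroup.induction_on with
  | H u =>
    show galJ p (1 : K ≃ₐ[F] K) (cls p u) = cls p u
    rw [galJ_cls]
    exact congrArg (cls p) (by ext; simp)

/-- The `Bool³`-parametrization of the subgroup generated by three elements of order ≤ 2. -/
def psi {G : Type*} [CommGroup G] (a b c : G) (e : Bool × Bool × Bool) : G :=
  (bif e.1 then a else 1) * (bif e.2.1 then b else 1) * (bif e.2.2 then c else 1)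

lemma cond_mul_cond {G : Type*} [CommGroup G] (x : G) (hx : x * x = 1) (a b : Bool) :
    (bif a then x else 1) * (bif b then x else 1) = bif Bool.xor a b then x else 1 := by
  cases a <;> cases b <;> simp [hx]

lemma mul_rearr {G : Type*} [CommGroup G] (a0 a1 a2 b0 b1 b2 : G) :
    (a0 * a1 * a2) * (b0 * b1 * b2) = (a0 * b0) * ((a1 * b1) * (a2 * b2)) := by
  rw [mul_mul_mul_comm (a0 * a1) a2 (b0 * b1) b2, mul_mul_mul_comm a0 a1 b0 b1, mul_assoc]

lemma psi_mul {G : Type*} [CommGroup G] (a b c : G)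
    (ha : a * a = 1) (hb : b * b = 1) (hc : c * c = 1) (e e' : Bool × Bool × Bool) :
    psi a b c e * psi a b c e' =
      psi a b c (Bool.xor e.1 e'.1, Bool.xor e.2.1 e'.2.1, Bool.xor e.2.2 e'.2.2) := by
  rcases e with ⟨u, v, w⟩; rcases e' with ⟨u', v', w'⟩
  show ((bif u then a else 1) * (bif v then b else 1) * (bif w then c else 1)) *
      ((bif u' then a else 1) * (bif v' then b else 1) * (bif w' then c else 1)) = _
  rw [mul_rearr, cond_mul_cond a ha, cond_mul_cond b hb, cond_mul_cond c hc,
    ← mul_assoc]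
  rfl

lemma cond_assemble {G : Type*} [CommGroup G] (x0 x1 x2 : G)
    (h0 : x0 * x0 = 1) (h1 : x1 * x1 = 1) (h2 : x2 * x2 = 1) (a b c : Bool) :
    (bif a then x1 else 1) * (bif b then x2 else 1) * (bif c then x0 * x1 * x2 else 1)
      = psi x0 x1 x2 (c, Bool.xor a c, Bool.xor b c) := by
  have hsplit : (bif c then x0 * x1 * x2 else 1)
      = (bif c then x0 else 1) * (bif c then x1 else 1) * (bif c then x2 else 1) := by
    cases c <;> simp
  rw [hsplit]
  show _ = (bif c then x0 else 1) * (bif Bool.xor a c then x1 else 1) *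
      (bif Bool.xor b c then x2 else 1)
  rw [← cond_mul_cond x1 h1 a c, ← cond_mul_cond x2 h2 b c]
  simp only [mul_comm, mul_left_comm, mul_assoc]

lemma psi_fff {G : Type*} [CommGroup G] (a b c : G) : psi a b c (false, false, false) = 1 := by
  show (1 : G) * 1 * 1 = 1; rw [mul_one, mul_one]

lemma psi_tff {G : Type*} [CommGroup G] (a b c : G) : psi a b c (true, false, false) = a := by
  show a * 1 * 1 = a; rw [mul_one, mul_one]

lemma psi_ftf {G : Type*} [CommGroup G] (a b c : G) : psi a b c (false, true, false) = b := by
  show 1 * b * 1 = b; rw [one_mul, mul_one]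

lemma psi_fft {G : Type*} [CommGroup G] (a b c : G) : psi a b c (false, false, true) = c := by
  show 1 * 1 * c = c; rw [one_mul, one_mul]

lemma psi_ttt {G : Type*} [CommGroup G] (a b c : G) : psi a b c (true, true, true) = a * b * c := rfl

lemma psi_tft {G : Type*} [CommGroup G] (a b c : G) : psi a b c (true, false, true) = a * c := by
  show a * 1 * c = a * c; rw [mul_one]

lemma psi_fix_classify : ∀ e : Bool × Bool × Bool,
    ((e.2.2, Bool.xor e.1 e.2.2, Bool.xor e.2.1 e.2.2) : Bool × Bool × Bool) = e →
    e = (false, false, false) ∨ e = (true, false, true) := by decide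

end AuxLemmas

set_option maxHeartbeats 1600000 in
/-- **Fixed Elements of Length 3 Submodules are Norms Lemma.** Let `K/F` be cyclic of
degree `4`, and `γ ∈ K^×` with `l(γ) = 3` and `[N_{K/F}(γ)]_F = [1]_F`.  Then there is
`α ∈ K^×` with `M_γ^G = ⟨N[α]⟩`. -/
theorem statement_18
    (F K : Type) [Field F] [Field K] [Algebra F K]
    [FiniteDimensional F K] [IsGalois F K]
    (σ : K ≃ₐ[F] K) (hσ : ∀ τ : K ≃ₐ[F] K, τ ∈ Subgroup.zpowers σ)
    (hG : Nat.card (K ≃ₐ[F] K) = 2 ^ 2)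
    (γ : Kˣ) (hl : Nat.card (cyc 2 F (cls 2 γ)) = 2 ^ 3)
    (hnorm : ∃ f : F, f ^ 2 = Algebra.norm F (γ : K)) :
    ∃ α : Kˣ,
      cyc 2 F (cls 2 γ) ⊓ fixedJ 2 (⊤ : Subgroup (K ≃ₐ[F] K)) =
        Subgroup.zpowers (normOp 2 F (cls 2 α)) := by
  classical
  obtain ⟨f, hf⟩ := hnorm
  -- basic group-theoretic facts
  have htop : Subgroup.zpowers σ = ⊤ := (Subgroup.eq_top_iff' _).mpr hσ
  have horder : orderOf σ = 4 := by
    have h1 := Nat.card_zpowers σ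
    rw [htop, Subgroup.card_top, hG] at h1
    norm_num at h1
    omega
  have hσ4 : σ ^ 4 = 1 := by rw [← horder]; exact pow_orderOf_eq_one σ
  have hσ2ne : σ ^ 2 ≠ 1 := by
    intro h
    have := orderOf_dvd_of_pow_eq_one h
    rw [horder] at this
    omega
  have hne : ∀ i j : ℕ, i < j → j < 4 → σ ^ i ≠ σ ^ j := by
    intro i j hij hj4 h
    have h2 : σ ^ i * σ ^ (j - i) = σ ^ i * 1 := by
      rw [← pow_add, mul_one, show i + (j - i) = j by omega, ← h]
    have hji : σ ^ (j - i) = 1 := mul_left_cancel h2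
    have hdvd := orderOf_dvd_of_pow_eq_one hji
    rw [horder] at hdvd
    have := Nat.le_of_dvd (by omega) hdvd
    omega
  have hτn : ∀ τ : K ≃ₐ[F] K, ∃ n : ℕ, n < 4 ∧ τ = σ ^ n := by
    intro τ
    obtain ⟨k, hk⟩ := Subgroup.mem_zpowers_iff.mp (hσ τ)
    have h0 : 0 ≤ k % 4 := Int.emod_nonneg k (by norm_num)
    have h4 : k % 4 < 4 := Int.emod_lt_of_pos k (by norm_num)
    have e1 : σ ^ (4 : ℤ) = 1 := by
      rw [show (4 : ℤ) = ((4 : ℕ) : ℤ) by norm_num, zpow_natCast, hσ4]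
    have e2 : σ ^ k = σ ^ ((k % 4).toNat) := by
      have e3 : σ ^ k = σ ^ (k % 4) := by
        conv_lhs => rw [← Int.mul_ediv_add_emod k 4]
        rw [zpow_add, zpow_mul, e1, one_zpow, one_mul]
      rw [e3, ← zpow_natCast σ ((k % 4).toNat), Int.toNat_of_nonneg h0]
    exact ⟨(k % 4).toNat, by omega, by rw [← hk, e2]⟩
  -- exponent-2 facts in J
  have hsq : ∀ x : Jgrp 2 K, x * x = 1 := by
    intro x; have := Jgrp_pow 2 x; rwa [pow_two] at this
  have hsq' : ∀ x y : Jgrp 2 K, x * (x * y) = y := by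
    intro x y; rw [← mul_assoc, hsq x]; exact one_mul y
  have hinvJ : ∀ x : Jgrp 2 K, x⁻¹ = x := fun x => inv_eq_of_mul_eq_one_right (hsq x)
  -- iterated sigma
  have hp2 : ∀ y : K, (σ ^ 2) y = σ (σ y) := fun y => by
    rw [pow_succ, AlgEquiv.mul_apply, pow_one]
  have hp3 : ∀ y : K, (σ ^ 3) y = σ (σ (σ y)) := fun y => by
    rw [pow_succ, AlgEquiv.mul_apply, hp2]
  have hp4 : ∀ y : K, σ (σ (σ (σ y))) = y := by
    intro y
    have h1 : (σ ^ 4) y = y := by rw [hσ4]; rfl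
    rw [pow_succ, AlgEquiv.mul_apply, hp3] at h1
    exact h1
  -- enumeration of the Galois group & norm as a product
  have h01 := hne 0 1 (by omega) (by omega)
  have h02 := hne 0 2 (by omega) (by omega)
  have h03 := hne 0 3 (by omega) (by omega)
  have h12 := hne 1 2 (by omega) (by omega)
  have h13 := hne 1 3 (by omega) (by omega)
  have h23 := hne 2 3 (by omega) (by omega)
  have n01 : (1 : K ≃ₐ[F] K) ≠ σ := by simpa using h01
  have n02 : (1 : K ≃ₐ[F] K) ≠ σ ^ 2 := by simpa using h02
  have n03 : (1 : K ≃ₐ[F] K) ≠ σ ^ 3 := by simpa using h03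
  have n12 : σ ≠ σ ^ 2 := by simpa using h12
  have n13 : σ ≠ σ ^ 3 := by simpa using h13
  have huniv : ({σ ^ 0, σ ^ 1, σ ^ 2, σ ^ 3} : Finset (K ≃ₐ[F] K)) = Finset.univ := by
    apply Finset.eq_univ_of_card
    rw [show Fintype.card (K ≃ₐ[F] K) = 4 by rw [← Nat.card_eq_fintype_card, hG]; norm_num]
    rw [Finset.card_insert_of_notMem (by simp [n01, n02, n03]),
        Finset.card_insert_of_notMem (by simp [n12, n13]),
        Finset.card_insert_of_notMem (by simp [h23]),
        Finset.card_singleton]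
  have hnormprod : ∀ x : K,
      algebraMap F K (Algebra.norm F x) = x * σ x * σ (σ x) * σ (σ (σ x)) := by
    intro x
    rw [Algebra.norm_eq_prod_automorphisms, ← huniv]
    rw [Finset.prod_insert (by simp [n01, n02, n03]),
        Finset.prod_insert (by simp [n12, n13]),
        Finset.prod_insert (by simp [h23]),
        Finset.prod_singleton]
    simp only [pow_zero, pow_one, AlgEquiv.one_apply, hp2, hp3]
    ring
  -- nonvanishing facts
  have hγ0 : (γ : K) ≠ 0 := γ.ne_zero
  have hσne : ∀ x : K, x ≠ 0 → σ x ≠ 0 := by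
    intro x hx h
    exact hx (by simpa using congrArg σ.symm h)
  have hNγ : Algebra.norm F (γ : K) ≠ 0 := by
    intro h
    have := hnormprod (γ : K)
    rw [h, map_zero] at this
    exact hγ0 (by
      rcases mul_eq_zero.mp this.symm with h' | h'
      · rcases mul_eq_zero.mp h' with h'' | h''
        · rcases mul_eq_zero.mp h'' with h3 | h3
          · exact h3
          · exact absurd h3 (hσne _ hγ0)
        · exact absurd h'' (by
            refine hσne _ (hσne _ hγ0))
      · exact absurd h' (hσne _ (hσne _ (hσne _ hγ0))))
  have hf0 : f ≠ 0 := by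
    intro h
    rw [h] at hf
    simp at hf
    exact hNγ hf.symm
  set f' : K := algebraMap F K f with hf'def
  have hfK : f' ≠ 0 := by
    rw [hf'def]
    simpa using hf0
  have hcf : σ f' = f' := σ.commutes f
  set g0 : K := (γ : K) with hg0def
  have hNg : g0 * σ g0 * σ (σ g0) * σ (σ (σ g0)) = f' * f' := by
    have h1 := hnormprod g0
    rw [← hf, map_pow] at h1
    rw [← h1, hf'def]
    ring
  -- the four classes x0 x1 x2 x3
  set x0 : Jgrp 2 K := cls 2 γ with hx0
  set x1 : Jgrp 2 K := galJ 2 σ x0 with hx1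
  set x2 : Jgrp 2 K := galJ 2 σ x1 with hx2
  set x3 : Jgrp 2 K := galJ 2 σ x2 with hx3
  have hx1c : x1 = cls 2 (Units.map (σ : K →* K) γ) := by rw [hx1, hx0, galJ_cls]
  have hx2c : x2 = cls 2 (Units.map (σ : K →* K) (Units.map (σ : K →* K) γ)) := by
    rw [hx2, hx1c, galJ_cls]
  have hx3c : x3 = cls 2 (Units.map (σ : K →* K)
      (Units.map (σ : K →* K) (Units.map (σ : K →* K) γ))) := by
    rw [hx3, hx2c, galJ_cls]
  have hgal0 : galJ 2 (σ ^ 0) x0 = x0 := by rw [pow_zero]; exact galJ_one 2 x0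
  have hgal1 : galJ 2 (σ ^ 1) x0 = x1 := by rw [pow_one]; all_goals exact hx1.symm
  have hgal2 : galJ 2 (σ ^ 2) x0 = x2 := by
    rw [pow_succ, galJ_galJ, pow_one, ← hx1]
    all_goals exact hx2.symm
  have hgal3 : galJ 2 (σ ^ 3) x0 = x3 := by
    rw [pow_succ', galJ_galJ, hgal2]
    all_goals exact hx3.symm
  have hgal4 : galJ 2 σ x3 = x0 := by
    rw [hx3c, galJ_cls, hx0]
    exact congrArg (cls 2) (by ext; simp [hp4])
  -- fixed under sigma implies fixed under everything
  have hfixall : ∀ x : Jgrp 2 K, galJ 2 σ x = x → ∀ τ : K ≃ₐ[F] K, galJ 2 τ x = x := by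
    intro x hx τ
    obtain ⟨n, -, rfl⟩ := hτn τ
    induction n with
    | zero => rw [pow_zero]; exact galJ_one 2 x
    | succ m ih => rw [pow_succ, galJ_galJ, hx, ih]
  -- orbit description
  have horbit : {y : Jgrp 2 K | ∃ τ : K ≃ₐ[F] K, galJ 2 τ x0 = y}
      = {x0, x1, x2, x3} := by
    ext y
    simp only [Set.mem_setOf_eq, Set.mem_insert_iff, Set.mem_singleton_iff]
    constructor
    · rintro ⟨τ, rfl⟩
      obtain ⟨n, hn4, rfl⟩ := hτn τ
      interval_cases n
      · exact Or.inl hgal0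
      · exact Or.inr (Or.inl hgal1)
      · exact Or.inr (Or.inr (Or.inl hgal2))
      · exact Or.inr (Or.inr (Or.inr hgal3))
    · rintro (rfl | rfl | rfl | rfl)
      exacts [⟨σ ^ 0, hgal0⟩, ⟨σ ^ 1, hgal1⟩, ⟨σ ^ 2, hgal2⟩, ⟨σ ^ 3, hgal3⟩]
  -- product of the four classes is trivial
  have hprod1 : x0 * x1 * x2 * x3 = 1 := by
    rw [hx0, hx1c, hx2c, hx3c]
    show QuotientGroup.mk (γ * Units.map (σ : K →* K) γ *
      Units.map (σ : K →* K) (Units.map (σ : K →* K) γ) *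
      Units.map (σ : K →* K) (Units.map (σ : K →* K) (Units.map (σ : K →* K) γ))) = 1
    rw [QuotientGroup.eq_one_iff]
    refine ⟨Units.mk0 f' hfK, ?_⟩
    have hNg2 : (γ : K) * σ (γ : K) * σ (σ (γ : K)) * σ (σ (σ (γ : K))) = f' * f' := by
      rw [← hg0def]; exact hNg
    ext
    push_cast [powMonoidHom_apply]
    simp only [Units.val_mk0, Units.coe_map, Units.val_mul, MonoidHom.coe_coe]
    rw [pow_two]
    linear_combination hNg2.symm
  have hx3e : x3 = x0 * x1 * x2 := by
    rw [← hinvJ (x0 * x1 * x2)]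
    exact (inv_eq_of_mul_eq_one_right hprod1).symm
  -- the subgroup S = range (psi x0 x1 x2)
  have hx0sq := hsq x0
  have hx1sq := hsq x1
  have hx2sq := hsq x2
  let S : Subgroup (Jgrp 2 K) :=
    { carrier := Set.range (psi x0 x1 x2)
      one_mem' := ⟨(false, false, false), psi_fff x0 x1 x2⟩
      mul_mem' := by
        rintro a b ⟨e, rfl⟩ ⟨e', rfl⟩
        exact ⟨_, (psi_mul x0 x1 x2 hx0sq hx1sq hx2sq e e').symm⟩
      inv_mem' := by
        rintro a ⟨e, rfl⟩
        rw [hinvJ]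
        exact ⟨e, rfl⟩ }
  have hSmem : ∀ y : Jgrp 2 K, y ∈ S ↔ ∃ e, psi x0 x1 x2 e = y := fun y => Iff.rfl
  have hx0S : x0 ∈ S := ⟨(true, false, false), psi_tff x0 x1 x2⟩
  have hx1S : x1 ∈ S := ⟨(false, true, false), psi_ftf x0 x1 x2⟩
  have hx2S : x2 ∈ S := ⟨(false, false, true), psi_fft x0 x1 x2⟩
  have hx3S : x3 ∈ S := ⟨(true, true, true), by rw [psi_ttt]; exact hx3e.symm⟩
  have hcyc_def : cyc 2 F (cls 2 γ)
      = Subgroup.closure {y : Jgrp 2 K | ∃ τ : K ≃ₐ[F] K, galJ 2 τ (cls 2 γ) = y} := rfl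
  have hScyc : S = cyc 2 F (cls 2 γ) := by
    apply le_antisymm
    · rintro y ⟨e, rfl⟩
      rcases e with ⟨a, b, c⟩
      have m0 : x0 ∈ cyc 2 F (cls 2 γ) := by
        rw [hcyc_def]; exact Subgroup.subset_closure ⟨σ ^ 0, hgal0⟩
      have m1 : x1 ∈ cyc 2 F (cls 2 γ) := by
        rw [hcyc_def]; exact Subgroup.subset_closure ⟨σ ^ 1, hgal1⟩
      have m2 : x2 ∈ cyc 2 F (cls 2 γ) := by
        rw [hcyc_def]; exact Subgroup.subset_closure ⟨σ ^ 2, hgal2⟩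
      show (bif a then x0 else 1) * (bif b then x1 else 1) * (bif c then x2 else 1)
        ∈ cyc 2 F (cls 2 γ)
      refine mul_mem (mul_mem ?_ ?_) ?_
      · cases a
        exacts [one_mem _, m0]
      · cases b
        exacts [one_mem _, m1]
      · cases c
        exacts [one_mem _, m2]
    · rw [hcyc_def]
      rw [Subgroup.closure_le]
      rw [show {y : Jgrp 2 K | ∃ τ : K ≃ₐ[F] K, galJ 2 τ (cls 2 γ) = y}
        = {x0, x1, x2, x3} from horbit]
      rintro y (rfl | rfl | rfl | rfl)
      exacts [hx0S, hx1S, hx2S, hx3S]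
  have hcardS : Nat.card S = 8 := by
    have : Nat.card (cyc 2 F (cls 2 γ)) = 8 := by rw [hl]; norm_num
    rw [hScyc]; exact this
  -- injectivity of psi
  let ψ' : Bool × Bool × Bool → S := fun e => ⟨psi x0 x1 x2 e, ⟨e, rfl⟩⟩
  have hsurj : Function.Surjective ψ' := by
    rintro ⟨y, e, rfl⟩
    exact ⟨e, rfl⟩
  have hbij : Function.Bijective ψ' := by
    refine (Nat.bijective_iff_surjective_and_card ψ').mpr ⟨hsurj, ?_⟩
    simp [Nat.card_eq_fintype_card, hcardS]
  have hinj : ∀ e e' : Bool × Bool × Bool, psi x0 x1 x2 e = psi x0 x1 x2 e' → e = e' := by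
    intro e e' h
    exact hbij.1 (Subtype.ext h)
  -- the action of sigma on psi
  have hcondmap : ∀ (t : Bool) (u v : Jgrp 2 K), galJ 2 σ u = v →
      galJ 2 σ (bif t then u else 1) = (bif t then v else 1) := by
    intro t u v h
    cases t
    · simpa using map_one (galJ 2 σ)
    · simpa using h
  have hgψ : ∀ e : Bool × Bool × Bool, galJ 2 σ (psi x0 x1 x2 e) =
      psi x0 x1 x2 (e.2.2, Bool.xor e.1 e.2.2, Bool.xor e.2.1 e.2.2) := by
    rintro ⟨a, b, c⟩
    have e0 : galJ 2 σ x0 = x1 := hx1.symm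
    have e1 : galJ 2 σ x1 = x2 := hx2.symm
    have e2 : galJ 2 σ x2 = x0 * x1 * x2 := by rw [← hx3e]; all_goals exact hx3.symm
    calc galJ 2 σ (psi x0 x1 x2 (a, b, c))
        = (bif a then x1 else 1) * (bif b then x2 else 1) *
            (bif c then x0 * x1 * x2 else 1) := by
          show galJ 2 σ ((bif a then x0 else 1) * (bif b then x1 else 1) *
            (bif c then x2 else 1)) = _
          rw [map_mul, map_mul, hcondmap a x0 x1 e0, hcondmap b x1 x2 e1,
            hcondmap c x2 (x0 * x1 * x2) e2]
      _ = psi x0 x1 x2 (c, Bool.xor a c, Bool.xor b c) :=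
          cond_assemble x0 x1 x2 hx0sq hx1sq hx2sq a b c
  have hfixed : ∀ e : Bool × Bool × Bool, galJ 2 σ (psi x0 x1 x2 e) = psi x0 x1 x2 e →
      psi x0 x1 x2 e = 1 ∨ psi x0 x1 x2 e = x0 * x2 := by
    intro e he
    rw [hgψ e] at he
    have h := hinj _ _ he
    rcases psi_fix_classify e h with h1 | h1
    · left; rw [h1]; exact psi_fff x0 x1 x2
    · right; rw [h1]; exact psi_tft x0 x1 x2
  -- construction of beta
  set η : K := g0 * σ g0 / f' with hηdef
  have hη : σ (σ η) * η = 1 := by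
    have h1 : σ (σ η) = σ (σ g0) * σ (σ (σ g0)) / f' := by
      rw [hηdef]; rw [map_div₀, map_div₀, map_mul, map_mul, hcf, hcf]
    rw [h1, hηdef]
    field_simp
    linear_combination hNg
  have hη0 : η ≠ 0 := by
    rw [hηdef]
    exact div_ne_zero (mul_ne_zero hγ0 (hσne _ hγ0)) hfK
  have hσση : σ (σ η) = η⁻¹ := eq_inv_of_mul_eq_one_left hη
  have hθ : ∃ θ : K, θ + η⁻¹ * σ (σ θ) ≠ 0 := by
    by_contra hcon
    push_neg at hcon
    have h1 := hcon 1
    rw [map_one, map_one, mul_one] at h1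
    have hη1 : η⁻¹ = -1 := by linear_combination h1
    have hσσ : ∀ x : K, σ (σ x) = x := by
      intro x
      have hx := hcon x
      rw [hη1] at hx
      linear_combination -hx
    apply hσ2ne
    apply AlgEquiv.ext
    intro x
    rw [hp2, hσσ]
    rfl
  obtain ⟨θ, hβ0⟩ := hθ
  set β : K := θ + η⁻¹ * σ (σ θ) with hβdef
  have hβne : β ≠ 0 := hβ0
  have hσ2β : σ (σ β) = η * β := by
    rw [hβdef, map_add, map_add, map_mul, map_mul, map_inv₀, map_inv₀, hσση, hp4, inv_inv]
    field_simp
    ring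
  have hσ3β : σ (σ (σ β)) = σ η * σ β := by
    have := congrArg σ hσ2β
    rwa [map_mul] at this
  have hση : σ η = σ g0 * σ (σ g0) / f' := by
    rw [hηdef, map_div₀, map_mul, hcf]
  set k : K := β * σ β * σ g0 / f' with hkdef
  have hk0 : k ≠ 0 := by
    rw [hkdef]
    exact div_ne_zero (mul_ne_zero (mul_ne_zero hβne (hσne _ hβne)) (hσne _ hγ0)) hfK
  have hkey : algebraMap F K (Algebra.norm F β) = g0 * σ (σ g0) * k ^ 2 := by
    rw [hnormprod β, hσ2β, map_mul, hση, hηdef, hkdef]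
    field_simp
  -- the norm class
  refine ⟨Units.mk0 β hβne, ?_⟩
  set n : Jgrp 2 K := normOp 2 F (cls 2 (Units.mk0 β hβne)) with hndef
  have hnx : n = x0 * x2 := by
    rw [hndef, hx0, hx2c]
    show QuotientGroup.mk (Units.map ((algebraMap F K : F →* K).comp
        (Algebra.norm F : K →* F)) (Units.mk0 β hβne))
      = QuotientGroup.mk (γ * Units.map (σ : K →* K) (Units.map (σ : K →* K) γ))
    rw [QuotientGroup.eq]
    refine ⟨(Units.mk0 k hk0)⁻¹, ?_⟩
    ext
    push_cast [powMonoidHom_apply]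
    simp only [Units.val_inv_eq_inv_val, Units.val_mk0, Units.coe_map,
      MonoidHom.coe_comp, Function.comp_apply, MonoidHom.coe_coe]
    have hkey2 : algebraMap F K (Algebra.norm F β) = (γ : K) * σ (σ (γ : K)) * k ^ 2 := by
      rw [hg0def] at hkey
      exact hkey
    have hσσγ0 : σ (σ (γ : K)) ≠ 0 := hσne _ (hσne _ hγ0)
    rw [hkey2]
    field_simp
  have hpsitft : psi x0 x1 x2 (true, false, true) = x0 * x2 := psi_tft x0 x1 x2
  have hnfix : galJ 2 σ n = n := by
    rw [hnx, ← hpsitft, hgψ]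
    rfl
  have hncyc : n ∈ cyc 2 F (cls 2 γ) := by
    rw [hnx, ← hScyc]
    exact mul_mem hx0S hx2S
  have hnfixmem : n ∈ fixedJ 2 (⊤ : Subgroup (K ≃ₐ[F] K)) := by
    intro τ _
    exact hfixall n hnfix τ
  -- conclusion
  ext y
  simp only [Subgroup.mem_inf]
  constructor
  · rintro ⟨hyc, hyf⟩
    have hyS : y ∈ S := by rw [hScyc]; exact hyc
    obtain ⟨e, rfl⟩ := hyS
    have hyfix : galJ 2 σ (psi x0 x1 x2 e) = psi x0 x1 x2 e :=
      hyf σ (Subgroup.mem_top σ)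
    rcases hfixed e hyfix with h1 | h2
    · rw [h1]; exact one_mem _
    · rw [h2, ← hnx]; exact Subgroup.mem_zpowers n
  · intro hy
    obtain ⟨m, rfl⟩ := Subgroup.mem_zpowers_iff.mp hy
    have h2 : n ^ (2 : ℤ) = 1 := by
      rw [show (2 : ℤ) = ((2 : ℕ) : ℤ) by norm_num, zpow_natCast, Jgrp_pow]
    have hcases : n ^ m = 1 ∨ n ^ m = n := by
      rcases Int.even_or_odd m with ⟨t, rfl⟩ | ⟨t, rfl⟩
      · left
        rw [zpow_add]
        exact hsq _
      · right
        rw [zpow_add, two_mul, zpow_add, zpow_one, hsq ((n : Jgrp 2 K) ^ t)]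
        exact one_mul n
    rcases hcases with h | h
    · rw [h]; exact ⟨one_mem _, one_mem _⟩
    · rw [h]; exact ⟨hncyc, hnfixmem⟩


end PC
end
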